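/- arXiv:math/0512329 — 4 statements merged into one kernel-verified Lean document; each statement's English description precedes it below -/
import Mathlib

section
/- Let R be a positively graded finitely generated algebra over a field K with R_0 = K, let π be a positive integer, and let p_1, ..., p_r be homogeneous prime ideals of R. Let S be the set of homogeneous elements x of R with gcd(deg x, π) = 1, and let I be the ideal generated by S. If I ⊄ p_i for every i, then S ⊄ p_1 ∪ ... ∪ p_r, i.e. there exists a homogeneous element x ∈ I with gcd(deg x, π) = 1 lying outside every p_i. -/
section Aux

variable {K : Type*} [Field K] {R : Type*} [CommRing R] [Algebra K R]
  (𝒜 : ℕ → Submodule K R) [GradedAlgebra 𝒜]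

/-- In a homogeneous ideal not contained in another ideal, there is a homogeneous
element witnessing the non-containment. -/
lemma stmt4_exists_homog_mem_not_mem {p q : Ideal R} (hp : Ideal.IsHomogeneous 𝒜 p)
    (h : ¬ p ≤ q) : ∃ (n : ℕ) (u : R), u ∈ 𝒜 n ∧ u ∈ p ∧ u ∉ q := by
  classical
  obtain ⟨a, hap, haq⟩ := SetLike.not_le_iff_exists.mp h
  by_contra hcon
  push_neg at hcon
  apply haq
  have hdec : a = ∑ i ∈ (DirectSum.decompose 𝒜 a).support, (DirectSum.decompose 𝒜 a i : R) :=
    (DirectSum.sum_support_decompose 𝒜 a).symm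
  rw [hdec]
  exact Ideal.sum_mem _ fun i _ =>
    hcon i _ (SetLike.coe_mem _) (hp i hap)

lemma stmt4_isUnit (hR0 : 𝒜 0 = Submodule.span K {(1 : R)}) {x : R}
    (hx : x ∈ 𝒜 0) (hx0 : x ≠ 0) : IsUnit x := by
  rw [hR0, Submodule.mem_span_singleton] at hx
  obtain ⟨c, hc⟩ := hx
  have hcne : c ≠ 0 := by rintro rfl; simp at hc; exact hx0 hc.symm
  refine IsUnit.of_mul_eq_one (a := x) (c⁻¹ • 1) ?_
  rw [← hc, smul_mul_smul_comm, mul_inv_cancel₀ hcne, one_mul, one_smul]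

lemma stmt4_unit_not_mem {x : R} (hu : IsUnit x) {p : Ideal R} (hp : p.IsPrime) : x ∉ p :=
  fun h => hp.ne_top (Ideal.eq_top_of_isUnit_mem _ h hu)

lemma stmt4_exists_exp (π : ℕ) (hπ : 0 < π) (D d : ℕ) (hd : Nat.Coprime d π) :
    ∃ m : ℕ, Nat.Coprime (D + m * d) π := by
  haveI : NeZero π := ⟨hπ.ne'⟩
  obtain ⟨w, hw⟩ := (ZMod.isUnit_iff_coprime d π).mpr hd
  refine ⟨(((w⁻¹ : (ZMod π)ˣ) : ZMod π) * (1 - (D : ZMod π))).val, ?_⟩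
  rw [← ZMod.isUnit_iff_coprime]
  push_cast
  rw [ZMod.natCast_val, ZMod.cast_id, ← hw]
  have : ((w⁻¹ : (ZMod π)ˣ) : ZMod π) * (1 - (D : ZMod π)) * ↑w = 1 - (D : ZMod π) := by
    rw [mul_comm, ← mul_assoc, Units.mul_inv, one_mul]
  rw [this]
  simpa using isUnit_one

/-- Main induction: prime avoidance for the set of homogeneous elements of degree
coprime to `π`. -/
lemma stmt4_aux (hR0 : 𝒜 0 = Submodule.span K {(1 : R)}) (π : ℕ) (hπ : 0 < π) :
    ∀ (r : ℕ) (p : Fin r → Ideal R), (∀ i, (p i).IsPrime) →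
      (∀ i, Ideal.IsHomogeneous 𝒜 (p i)) →
      (∀ i, ¬ {x : R | ∃ d : ℕ, Nat.Coprime d π ∧ x ∈ 𝒜 d} ⊆ ↑(p i)) →
      ∃ x ∈ {x : R | ∃ d : ℕ, Nat.Coprime d π ∧ x ∈ 𝒜 d}, ∀ i, x ∉ p i := by
  intro r
  induction r with
  | zero =>
    intro p _ _ _
    exact ⟨0, ⟨1, Nat.coprime_one_left π, (𝒜 1).zero_mem⟩, fun i => i.elim0⟩
  | succ r IH =>
    intro p hprime hhom havoid
    by_cases hc : ∃ i : Fin r, p i.castSucc ≤ p (Fin.last r)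
    · -- some earlier prime is contained in the last one: replace it by the last one
      obtain ⟨i0, hi0⟩ := hc
      set q : Fin r → Ideal R := fun j => if j = i0 then p (Fin.last r) else p j.castSucc with hq
      have hq1 : ∀ j, (q j).IsPrime := fun j => by
        by_cases h : j = i0 <;> simp [hq, h, hprime]
      have hq2 : ∀ j, Ideal.IsHomogeneous 𝒜 (q j) := fun j => by
        by_cases h : j = i0 <;> simp [hq, h, hhom]
      have hq3 : ∀ j, ¬ {x : R | ∃ d : ℕ, Nat.Coprime d π ∧ x ∈ 𝒜 d} ⊆ ↑(q j) := fun j => by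
        by_cases h : j = i0 <;> simp [hq, h, havoid]
      obtain ⟨x, hxS, hx⟩ := IH q hq1 hq2 hq3
      refine ⟨x, hxS, fun i => ?_⟩
      refine Fin.lastCases ?_ (fun j => ?_) i
      · have := hx i0; simpa [hq] using this
      · by_cases h : j = i0
        · subst h
          have h2 : x ∉ p (Fin.last r) := by simpa [hq] using hx j
          exact fun hmem => h2 (hi0 hmem)
        · have := hx j; simpa [hq, h] using this
    · push_neg at hc
      -- x avoids the first r primes
      obtain ⟨x, ⟨e, he, hxe⟩, hx⟩ := IH (fun j => p j.castSucc)
        (fun j => hprime _) (fun j => hhom _) (fun j => havoid _)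
      by_cases hxr : x ∈ p (Fin.last r)
      · -- key construction
        -- ensure e ≥ 1
        obtain ⟨e, he, hxe, he1⟩ :
            ∃ e : ℕ, Nat.Coprime e π ∧ x ∈ 𝒜 e ∧ 1 ≤ e := by
          rcases Nat.eq_zero_or_pos e with rfl | hpos
          · -- e = 0 : π = 1, and x must be 0 (else a unit inside the prime p last)
            have hx0 : x = 0 := by
              by_contra h0
              exact stmt4_unit_not_mem (stmt4_isUnit 𝒜 hR0 hxe h0) (hprime _) hxr
            exact ⟨1, Nat.coprime_one_left π, by rw [hx0]; exact (𝒜 1).zero_mem, le_refl 1⟩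
          · exact ⟨e, he, hxe, hpos⟩
        -- s ∈ S, s ∉ p last
        obtain ⟨s, ⟨d, hd, hsd⟩, hs⟩ := Set.not_subset.mp (havoid (Fin.last r))
        -- homogeneous u_i ∈ p i.castSucc \ p last
        choose n u hu1 hu2 hu3 using fun i : Fin r =>
          stmt4_exists_homog_mem_not_mem 𝒜 (hhom i.castSucc) (hc i)
        set D : ℕ := ∑ i : Fin r, n i with hD
        set U : R := ∏ i : Fin r, u i with hU
        have hUmem : U ∈ 𝒜 D := SetLike.prod_mem_graded 𝒜 _ _ fun i _ => hu1 i
        have hUp : ∀ i : Fin r, U ∈ p i.castSucc := fun i => by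
          rw [hU, ← Finset.prod_erase_mul _ _ (Finset.mem_univ i)]
          exact Ideal.mul_mem_left _ _ (hu2 i)
        have hUr : U ∉ p (Fin.last r) := by
          intro hmem
          haveI := hprime (Fin.last r)
          obtain ⟨i, _, hi⟩ := Ideal.IsPrime.prod_mem_iff.mp (hU ▸ hmem)
          exact hu3 i hi
        -- choose exponent m with D + m*d coprime to π
        obtain ⟨m, hm⟩ := stmt4_exists_exp π hπ D d hd
        set F : ℕ := D + m * d with hF
        set y : R := U * s ^ m with hy
        have hyF : y ∈ 𝒜 F := by
          have := SetLike.mul_mem_graded hUmem (SetLike.pow_mem_graded m hsd)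
          simpa [hy, hF, smul_eq_mul] using this
        have hyp : ∀ i : Fin r, y ∈ p i.castSucc := fun i =>
          Ideal.mul_mem_right _ _ (hUp i)
        have hyr : y ∉ p (Fin.last r) := by
          intro hmem
          rcases (hprime (Fin.last r)).mem_or_mem hmem with h | h
          · exact hUr h
          · exact hs ((hprime (Fin.last r)).mem_of_pow_mem m h)
        -- ensure F ≥ 1 (otherwise y is a unit and avoids everything)
        rcases Nat.eq_zero_or_pos F with hF0 | hF1
        · have hy0 : y ≠ 0 := fun h => hyr (h ▸ (p (Fin.last r)).zero_mem)
          have : IsUnit y := stmt4_isUnit 𝒜 hR0 (hF0 ▸ hyF) hy0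
          exact ⟨y, ⟨F, hm, hyF⟩, fun i => stmt4_unit_not_mem this (hprime i)⟩
        · -- final element z = x^F + y^e
          refine ⟨x ^ F + y ^ e, ⟨F * e, (hm.mul he), ?_⟩, fun i => ?_⟩
          · refine Submodule.add_mem _ ?_ ?_
            · simpa [smul_eq_mul] using SetLike.pow_mem_graded F hxe
            · have := SetLike.pow_mem_graded e hyF
              simpa [smul_eq_mul, mul_comm] using this
          · refine Fin.lastCases ?_ (fun j => ?_) i
            · intro hmem
              have hxF : x ^ F ∈ p (Fin.last r) := Ideal.pow_mem_of_mem _ hxr F hF1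
              have : y ^ e ∈ p (Fin.last r) := by
                have := Ideal.sub_mem _ hmem hxF
                simpa using this
              exact hyr ((hprime (Fin.last r)).mem_of_pow_mem e this)
            · intro hmem
              have hye : y ^ e ∈ p j.castSucc := Ideal.pow_mem_of_mem _ (hyp j) e he1
              have : x ^ F ∈ p j.castSucc := by
                have := Ideal.sub_mem _ hmem hye
                simpa using this
              exact hx j ((hprime j.castSucc).mem_of_pow_mem F this)
      · exact ⟨x, ⟨e, he, hxe⟩, fun i =>
          Fin.lastCases hxr (fun j => hx j) i⟩

end Aux

/-- Prime avoidance for homogeneous elements of degree coprime to `π`.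
Let `R` be a positively graded finitely generated `K`-algebra with `R₀ = K`, `π > 0`,
and `p₁, …, p_r` homogeneous prime ideals. Let `S` be the set of homogeneous elements
of degree coprime to `π` and `I` the ideal generated by `S`. If `I ⊄ pᵢ` for all `i`,
then there is `x ∈ S ⊆ I` lying outside every `pᵢ`. -/
theorem stmt4 (K : Type*) [Field K] (R : Type*) [CommRing R] [Algebra K R]
    (𝒜 : ℕ → Submodule K R) [GradedAlgebra 𝒜]
    (hR0 : 𝒜 0 = Submodule.span K {(1 : R)})
    (hfg : Algebra.FiniteType K R)
    (π : ℕ) (hπ : 0 < π)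
    (r : ℕ) (p : Fin r → Ideal R)
    (hprime : ∀ i, (p i).IsPrime)
    (hhom : ∀ i, Ideal.IsHomogeneous 𝒜 (p i))
    (S : Set R) (hS : S = {x : R | ∃ d : ℕ, Nat.Coprime d π ∧ x ∈ 𝒜 d})
    (I : Ideal R) (hI : I = Ideal.span S)
    (havoid : ∀ i, ¬ I ≤ p i) :
    ∃ x ∈ S, x ∈ I ∧ ∀ i, x ∉ p i := by
  subst hS hI
  have havoid' : ∀ i, ¬ {x : R | ∃ d : ℕ, Nat.Coprime d π ∧ x ∈ 𝒜 d} ⊆ ↑(p i) := by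
    intro i h
    exact havoid i (Ideal.span_le.mpr h)
  obtain ⟨x, hxS, hx⟩ := stmt4_aux 𝒜 hR0 π hπ r p hprime hhom havoid'
  exact ⟨x, hxS, Ideal.subset_span hxS, hx⟩
end

section
/- Let p_1, ..., p_r be homogeneous prime ideals in a positively graded ring R and let x_1, ..., x_r be homogeneous elements such that x_j ∈ p_j but x_j ∉ p_i for all i ≠ j (with r ≥ 2). Set α = deg x_1 and β = deg(x_2 ⋯ x_r). Then the element x = x_1^{lcm(α,β)/α} + (x_2 ⋯ x_r)^{lcm(α,β)/β} is homogeneous of degree lcm(α, β) and x ∉ p_1 ∪ ... ∪ p_r. -/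
open Finset in
/-- Let `p₁,…,p_r` be homogeneous prime ideals in a positively graded ring
and `x₁,…,x_r` homogeneous elements of positive degrees with `x_j ∈ p_j`, `x_j ∉ p_i`
for `i ≠ j`. With `α = deg x₁`, `β = deg (x₂⋯x_r)`, the element
`x = x₁^(lcm(α,β)/α) + (x₂⋯x_r)^(lcm(α,β)/β)` is homogeneous of degree `lcm(α,β)`
and lies outside every `pᵢ`. -/
theorem stmt5 (K : Type*) [Field K] (R : Type*) [CommRing R] [Algebra K R]
    (𝒜 : ℕ → Submodule K R) [GradedAlgebra 𝒜]
    (r : ℕ) (hr : 2 ≤ r) (p : Fin r → Ideal R)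
    (hprime : ∀ i, (p i).IsPrime)
    (hhom : ∀ i, Ideal.IsHomogeneous 𝒜 (p i))
    (hr0 : 0 < r) (x : Fin r → R) (d : Fin r → ℕ)
    (hdpos : ∀ j, 0 < d j)
    (hx : ∀ j, x j ∈ 𝒜 (d j))
    (hin : ∀ j, x j ∈ p j)
    (hout : ∀ i j, i ≠ j → x j ∉ p i)
    (α β : ℕ)
    (hα : α = d ⟨0, hr0⟩)
    (hβ : β = ∑ j ∈ univ.erase ⟨0, hr0⟩, d j) :
    (x ⟨0, hr0⟩) ^ (Nat.lcm α β / α) + (∏ j ∈ univ.erase ⟨0, hr0⟩, x j) ^ (Nat.lcm α β / β)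
        ∈ 𝒜 (Nat.lcm α β) ∧
    ∀ i, (x ⟨0, hr0⟩) ^ (Nat.lcm α β / α) + (∏ j ∈ univ.erase ⟨0, hr0⟩, x j) ^ (Nat.lcm α β / β)
        ∉ p i := by
  set i0 : Fin r := ⟨0, hr0⟩
  have i1 : Fin r := ⟨1, hr⟩
  have hαpos : 0 < α := hα ▸ hdpos _
  have hβpos : 0 < β := by
    rw [hβ]
    apply Finset.sum_pos (fun j _ => hdpos j)
    exact ⟨⟨1, hr⟩, by simp [i0, Fin.ext_iff]⟩
  have hlcmpos : 0 < Nat.lcm α β := Nat.pos_of_ne_zero (Nat.lcm_ne_zero hαpos.ne' hβpos.ne')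
  have hdvdα := Nat.dvd_lcm_left α β
  have hdvdβ := Nat.dvd_lcm_right α β
  have heα : (Nat.lcm α β / α) * α = Nat.lcm α β := Nat.div_mul_cancel hdvdα
  have heβ : (Nat.lcm α β / β) * β = Nat.lcm α β := Nat.div_mul_cancel hdvdβ
  have hepos : 0 < Nat.lcm α β / α := Nat.div_pos (Nat.le_of_dvd hlcmpos hdvdα) hαpos
  have hepos' : 0 < Nat.lcm α β / β := Nat.div_pos (Nat.le_of_dvd hlcmpos hdvdβ) hβpos
  have hprod : (∏ j ∈ univ.erase i0, x j) ∈ 𝒜 β := by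
    rw [hβ]
    exact SetLike.prod_mem_graded 𝒜 d x (fun j _ => hx j)
  have hterm1 : (x i0) ^ (Nat.lcm α β / α) ∈ 𝒜 (Nat.lcm α β) := by
    have := SetLike.pow_mem_graded (A := 𝒜) (Nat.lcm α β / α) (hα ▸ hx i0)
    simpa [smul_eq_mul, heα] using this
  have hterm2 : (∏ j ∈ univ.erase i0, x j) ^ (Nat.lcm α β / β) ∈ 𝒜 (Nat.lcm α β) := by
    have := SetLike.pow_mem_graded (A := 𝒜) (Nat.lcm α β / β) hprod
    simpa [smul_eq_mul, heβ] using this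
  refine ⟨Submodule.add_mem _ hterm1 hterm2, fun i => ?_⟩
  haveI := hprime
  by_cases hi : i = i0
  · subst hi
    have h1 : (x i0) ^ (Nat.lcm α β / α) ∈ p i0 := Ideal.pow_mem_of_mem _ (hin i0) _ hepos
    have h2 : (∏ j ∈ univ.erase i0, x j) ^ (Nat.lcm α β / β) ∉ p i0 := by
      rw [(hprime i0).pow_mem_iff_mem _ hepos', Ideal.IsPrime.prod_mem_iff]
      rintro ⟨j, hj, hjmem⟩
      exact hout i0 j (by simp at hj; exact fun h => hj h.symm) hjmem
    intro hsum
    exact h2 (by simpa using Ideal.sub_mem _ hsum h1)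
  · have h1 : (x i0) ^ (Nat.lcm α β / α) ∉ p i := by
      rw [(hprime i).pow_mem_iff_mem _ hepos]
      exact hout i i0 hi
    have h2 : (∏ j ∈ univ.erase i0, x j) ^ (Nat.lcm α β / β) ∈ p i := by
      apply Ideal.pow_mem_of_mem _ _ _ hepos'
      rw [Ideal.IsPrime.prod_mem_iff]
      exact ⟨i, by simpa using hi, hin i⟩
    intro hsum
    exact h1 (by simpa using Ideal.sub_mem _ hsum h2)
end

section
/- Let K be a field and R a polynomial ring K[r_1, ..., r_d] graded by assigning positive degrees deg r_i, and let p = lcm(deg r_1, ..., deg r_d). Let S be the K-subalgebra of R generated by all homogeneous elements of degree p. Then R is a finitely generated S-module. -/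
open MvPolynomial in
lemma isWeightedHomogeneous_pow_aux {K : Type*} [Field K] {d : ℕ} (w : Fin d → ℕ)
    (i : Fin d) (k : ℕ) :
    IsWeightedHomogeneous w ((X i : MvPolynomial (Fin d) K) ^ k) (k * w i) := by
  induction k with
  | zero => simpa using isWeightedHomogeneous_C w (1 : K)
  | succ n ih =>
    have := ih.mul (isWeightedHomogeneous_X K w i)
    rw [pow_succ]
    convert this using 1
    ring

open MvPolynomial in
/-- Let `R = K[r₁,…,r_d]` be a polynomial ring graded by positive degrees
`deg rᵢ = w i`, `p = lcm(deg r₁,…,deg r_d)`, and `S` the `K`-subalgebra generated by the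
homogeneous elements of degree `p`. Then `R` is a finitely generated `S`-module. -/
theorem stmt12 (K : Type*) [Field K] (d : ℕ) (w : Fin d → ℕ) (hw : ∀ i, 0 < w i)
    (p : ℕ) (hp : p = Finset.univ.lcm w)
    (S : Subalgebra K (MvPolynomial (Fin d) K))
    (hS : S = Algebra.adjoin K
      ((weightedHomogeneousSubmodule K w p : Submodule K (MvPolynomial (Fin d) K)) :
        Set (MvPolynomial (Fin d) K))) :
    Module.Finite S (MvPolynomial (Fin d) K) := by
  have hp0 : 0 < p := by
    rw [hp]
    rcases Nat.eq_zero_or_pos (Finset.univ.lcm w) with h | h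
    · rw [Finset.lcm_eq_zero_iff] at h
      obtain ⟨i, -, hi⟩ := h
      exact absurd hi (hw i).ne'
    · exact h
  -- each X i is integral over S
  have hint : ∀ i : Fin d, IsIntegral S (X i : MvPolynomial (Fin d) K) := by
    intro i
    have hdvd : w i ∣ p := hp ▸ Finset.dvd_lcm (Finset.mem_univ i)
    have hk : p / w i * w i = p := Nat.div_mul_cancel hdvd
    have hk0 : 0 < p / w i := Nat.div_pos (Nat.le_of_dvd hp0 hdvd) (hw i)
    have hmem : (X i : MvPolynomial (Fin d) K) ^ (p / w i) ∈ S := by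
      rw [hS]
      apply Algebra.subset_adjoin
      show _ ∈ weightedHomogeneousSubmodule K w p
      rw [mem_weightedHomogeneousSubmodule]
      have h := isWeightedHomogeneous_pow_aux (K := K) w i (p / w i)
      rwa [hk] at h
    refine IsIntegral.of_pow hk0 ?_
    exact isIntegral_algebraMap (x := (⟨_, hmem⟩ : S))
  have hadj : Algebra.adjoin S (Set.range (X : Fin d → MvPolynomial (Fin d) K)) = ⊤ := by
    rw [eq_top_iff]
    intro x _
    have hx : x ∈ Algebra.adjoin K (Set.range (X : Fin d → MvPolynomial (Fin d) K)) := by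
      rw [MvPolynomial.adjoin_range_X]; trivial
    refine Algebra.adjoin_induction ?_ ?_ ?_ ?_ hx
    · exact fun y hy => Algebra.subset_adjoin hy
    · intro r
      exact Subalgebra.algebraMap_mem _ (algebraMap K S r)
    · exact fun a b _ _ ha hb => add_mem ha hb
    · exact fun a b _ _ ha hb => mul_mem ha hb
  have hfg : (Algebra.adjoin S
      (Set.range (X : Fin d → MvPolynomial (Fin d) K))).toSubmodule.FG :=
    fg_adjoin_of_finite (Set.finite_range _) (by rintro x ⟨i, rfl⟩; exact hint i)
  rw [hadj, Algebra.top_toSubmodule] at hfg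
  exact ⟨hfg⟩
end

section
/- Let P ⊂ ℝ^m be a rational polytope and F a face of P whose affine span contains a point with integer coordinates. Then for all sufficiently large positive integers n, the dilate nF contains a point with integer coordinates. -/
-- helper: denominator divides A gives integrality
lemma aux_int_mul (q : ℚ) (A : ℕ) (h : q.den ∣ A) : ∃ z : ℤ, (A : ℚ) * q = (z : ℚ) := by
  obtain ⟨c, hc⟩ := h
  refine ⟨c * q.num, ?_⟩
  have hq : (q.den : ℚ) * q = q.num := by
    nth_rewrite 2 [← Rat.num_div_den q]
    rw [mul_div_cancel₀]
    exact_mod_cast q.den_nz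
  subst hc
  push_cast
  rw [mul_comm (q.den : ℚ) (c : ℚ), mul_assoc, hq]


open Pointwise in
/-- Let `P ⊂ ℝ^m` be a rational polytope and `F` a face of `P` whose
affine span contains an integer point. Then for all sufficiently large `n`, the dilate
`nF` contains an integer point. -/
theorem stmt16 (m : ℕ) (V : Finset (Fin m → ℚ)) (hV : V.Nonempty)
    (P : Set (Fin m → ℝ))
    (hP : P = convexHull ℝ ((fun v : Fin m → ℚ => fun i => ((v i : ℝ))) '' V))
    (F : Set (Fin m → ℝ)) (hF : IsExposed ℝ P F) (hFne : F.Nonempty)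
    (hint : ∃ x : Fin m → ℝ, x ∈ affineSpan ℝ F ∧ ∀ i, ∃ z : ℤ, x i = z) :
    ∃ N : ℕ, ∀ n : ℕ, N ≤ n → ∃ y : Fin m → ℤ,
      (fun i => ((y i : ℝ))) ∈ (n : ℝ) • F := by
  classical
  obtain ⟨l, hFeq⟩ := hF hFne
  set e : (Fin m → ℚ) → (Fin m → ℝ) := fun v i => ((v i : ℝ)) with he
  have hPc : P = convexHull ℝ ↑(V.image e) := by rw [hP, Finset.coe_image]
  set T : Finset (Fin m → ℝ) := V.image e with hT
  have hTne : T.Nonempty := hV.image e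
  have hTl : (T.image l).Nonempty := hTne.image l
  set M : ℝ := (T.image l).max' hTl with hM
  have hle : ∀ p ∈ P, l p ≤ M := by
    rw [hPc]
    intro p hp
    have hsub : convexHull ℝ (↑T : Set (Fin m → ℝ)) ⊆ {x | l x ≤ M} :=
      convexHull_min (fun t ht => Finset.le_max' _ _ (Finset.mem_image_of_mem l ht))
        (convex_halfSpace_le (LinearMap.isLinear l.toLinearMap) M)
    exact hsub hp
  obtain ⟨t0, ht0T, ht0⟩ : ∃ t ∈ T, l t = M := by
    obtain ⟨y, hy, hy'⟩ := Finset.mem_image.1 ((T.image l).max'_mem hTl)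
    exact ⟨y, hy, hy'⟩
  have ht0P : t0 ∈ P := hPc ▸ subset_convexHull ℝ _ ht0T
  have hFchar : ∀ x, x ∈ F ↔ x ∈ P ∧ l x = M := by
    intro x; rw [hFeq]; constructor
    · rintro ⟨hxP, hmax⟩
      exact ⟨hxP, le_antisymm (hle x hxP) (ht0 ▸ hmax t0 ht0P)⟩
    · rintro ⟨hxP, hx⟩; exact ⟨hxP, fun y hy => hx ▸ hle y hy⟩
  set Vq : Finset (Fin m → ℚ) := V.filter (fun v => l (e v) = M) with hVq
  have hVqF : ∀ v ∈ Vq, e v ∈ F := by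
    intro v hv
    rw [Finset.mem_filter] at hv
    exact (hFchar (e v)).2 ⟨hPc ▸ subset_convexHull ℝ _ (Finset.mem_image_of_mem e hv.1), hv.2⟩
  have hVqne : Vq.Nonempty := by
    obtain ⟨v0, hv0, rfl⟩ := Finset.mem_image.1 ht0T
    exact ⟨v0, Finset.mem_filter.2 ⟨hv0, ht0⟩⟩
  have hFconv : Convex ℝ F := hF.convex (hP ▸ convex_convexHull ℝ _)
  have hSF : convexHull ℝ (e '' ↑Vq) ⊆ F :=
    convexHull_min (by rintro _ ⟨v, hv, rfl⟩; exact hVqF v hv) hFconv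
  have hFS : F ⊆ convexHull ℝ (e '' ↑Vq) := by
    intro x hx
    obtain ⟨hxP, hxM⟩ := (hFchar x).1 hx
    rw [hPc, Finset.convexHull_eq] at hxP
    obtain ⟨w, hw0, hw1, hwx⟩ := hxP
    have hxsum : x = ∑ t ∈ T, w t • t := by
      rw [← hwx, Finset.centerMass_eq_of_sum_1 _ _ hw1]
      simp
    have hterm : ∀ t ∈ T, 0 ≤ w t * (M - l t) := by
      intro t ht
      have : l t ≤ M := hle t (hPc ▸ subset_convexHull ℝ _ ht)
      exact mul_nonneg (hw0 t ht) (by linarith)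
    have hzero : ∑ t ∈ T, w t * (M - l t) = 0 := by
      have hlx : l x = ∑ t ∈ T, w t * l t := by
        rw [hxsum, map_sum]
        simp [smul_eq_mul]
      have : ∑ t ∈ T, w t * (M - l t) = M * (∑ t ∈ T, w t) - ∑ t ∈ T, w t * l t := by
        rw [Finset.mul_sum, ← Finset.sum_sub_distrib]
        congr 1; ext t; ring
      rw [this, hw1, ← hlx, hxM]; ring
    have hkey : ∀ t ∈ T, w t ≠ 0 → l t = M := by
      intro t ht hwt
      have := (Finset.sum_eq_zero_iff_of_nonneg hterm).1 hzero t ht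
      rcases mul_eq_zero.1 this with h | h
      · exact absurd h hwt
      · linarith
    have hmemS : ∀ t ∈ T.filter (fun t => w t ≠ 0), t ∈ e '' ↑Vq := by
      intro t ht
      rw [Finset.mem_filter] at ht
      obtain ⟨v, hv, rfl⟩ := Finset.mem_image.1 ht.1
      exact ⟨v, Finset.mem_filter.2 ⟨hv, hkey _ ht.1 ht.2⟩, rfl⟩
    have hsum' : (0 : ℝ) < ∑ t ∈ T.filter (fun t => w t ≠ 0), w t := by
      rw [Finset.sum_filter_ne_zero, hw1]; norm_num
    have := Finset.centerMass_mem_convexHull (T.filter (fun t => w t ≠ 0))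
      (fun t ht => hw0 t (Finset.mem_of_mem_filter t ht)) hsum' hmemS
    rw [Finset.centerMass_filter_ne_zero] at this
    rw [← hwx]
    exact this
  -- affine span reduction
  have hspan : affineSpan ℝ F ≤ affineSpan ℝ (e '' ↑Vq) := by
    calc affineSpan ℝ F ≤ affineSpan ℝ (convexHull ℝ (e '' ↑Vq)) := affineSpan_mono ℝ hFS
    _ = affineSpan ℝ (e '' ↑Vq) := affineSpan_convexHull _
  obtain ⟨x, hxspan, hxint⟩ := hint
  have hrange : Set.range (fun v : ↥Vq => e ↑v) = e '' ↑Vq := by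
    rw [show (fun v : ↥Vq => e ↑v) = e ∘ ((↑) : ↥Vq → (Fin m → ℚ)) from rfl,
      Set.range_comp, Subtype.range_coe_subtype]
    rw [Finset.setOf_mem]
  have hx2 : x ∈ affineSpan ℝ (Set.range (fun v : ↥Vq => e ↑v)) := by
    rw [hrange]; exact hspan hxspan
  obtain ⟨s, w, hw1', hxw⟩ := eq_affineCombination_of_mem_affineSpan hx2
  rw [Finset.affineCombination_eq_linear_combination _ _ _ hw1'] at hxw
  -- integer data
  set k : ℕ := Vq.card with hk
  have hkpos : 0 < k := Finset.card_pos.2 hVqne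
  set A : ℕ := ∏ v ∈ Vq, ∏ i, (v i).den with hA
  have hApos : 0 < A := Finset.prod_pos fun v _ => Finset.prod_pos fun i _ => (v i).pos
  have hdvd : ∀ v ∈ Vq, ∀ i, (v i).den ∣ A := by
    intro v hv i
    have h1 : (v i).den ∣ ∏ i, (v i).den :=
      Finset.dvd_prod_of_mem (fun i => (v i).den) (Finset.mem_univ i)
    have h2 : (∏ i, (v i).den) ∣ A :=
      Finset.dvd_prod_of_mem (fun v => ∏ i, (v i).den) hv
    exact dvd_trans h1 h2
  set zf : (Fin m → ℚ) → Fin m → ℤ := fun v i => ((A : ℚ) * v i).num with hzf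
  have hzfR : ∀ v ∈ Vq, ∀ i, ((zf v i : ℤ) : ℝ) = (A : ℝ) * ((v i : ℚ) : ℝ) := by
    intro v hv i
    obtain ⟨z, hz⟩ := aux_int_mul (v i) A (hdvd v hv i)
    have h1 : zf v i = z := by rw [hzf]; simp [hz]
    have h2 := congrArg (fun q : ℚ => (q : ℝ)) hz
    push_cast at h2
    rw [h1]
    exact_mod_cast h2.symm
  set g : Fin m → ℤ := fun i => ∑ v ∈ Vq, zf v i with hg
  choose zx hzx using hxint
  set W : ℝ := ∑ j ∈ s, |w j| with hW
  have hWub : ∀ j ∈ s, |w j| ≤ W := fun j hj =>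
    Finset.single_le_sum (f := fun j => |w j|) (fun i _ => abs_nonneg _) hj
  have hW0 : 0 ≤ W := Finset.sum_nonneg fun i _ => abs_nonneg _
  set D : ℕ := A * k with hD
  have hDpos : 0 < D := Nat.mul_pos hApos hkpos
  set C : ℕ := ⌈(D : ℝ) * W⌉₊ + 1 with hC
  refine ⟨D * C, ?_⟩
  intro n hn
  set q : ℕ := n / D with hqdef
  set r : ℕ := n % D with hrdef
  have hqC : C ≤ q := by
    rw [hqdef, Nat.le_div_iff_mul_le hDpos]
    calc C * D = D * C := mul_comm _ _
    _ ≤ n := hn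
  have hrD : r < D := Nat.mod_lt _ hDpos
  have hsplit : D * q + r = n := Nat.div_add_mod n D
  have hnpos : 0 < n := lt_of_lt_of_le (Nat.mul_pos hDpos (Nat.succ_pos _)) hn
  set wt : ↥Vq → ℝ := fun j => r * (if j ∈ s then w j else 0) + q * A with hwt
  have hqA : (D : ℝ) * W < (q : ℝ) * A := by
    have h1 : (D : ℝ) * W < C := by
      have hceil := Nat.le_ceil ((D : ℝ) * W)
      rw [hC]
      push_cast
      linarith
    have h2 : (C : ℝ) ≤ q := by exact_mod_cast hqC
    have h3 : (q : ℝ) ≤ (q : ℝ) * A := by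
      have : (1 : ℝ) ≤ A := by exact_mod_cast hApos
      nlinarith [Nat.cast_nonneg (α := ℝ) q]
    linarith
  have hwt0 : ∀ j, 0 ≤ wt j := by
    intro j
    rw [hwt]
    by_cases hj : j ∈ s
    · simp only [hj, if_true]
      have habs : |(r : ℝ) * w j| ≤ (D : ℝ) * W := by
        rw [abs_mul, abs_of_nonneg (Nat.cast_nonneg r)]
        exact mul_le_mul (by exact_mod_cast hrD.le) (hWub j hj) (abs_nonneg _)
          (Nat.cast_nonneg D)
      have hneg := neg_abs_le ((r : ℝ) * w j)
      linarith
    · simp only [hj, if_false]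
      positivity
  have hwtsum : ∑ j : ↥Vq, wt j = (n : ℝ) := by
    simp only [hwt]
    rw [Finset.sum_add_distrib, ← Finset.mul_sum, Finset.sum_ite_mem, Finset.univ_inter,
      hw1', Finset.sum_const, Finset.card_univ, Fintype.card_coe, ← hk, nsmul_eq_mul]
    have hcast : ((D * q + r : ℕ) : ℝ) = (n : ℝ) := by exact_mod_cast congrArg (fun t : ℕ => (t : ℝ)) hsplit
    push_cast [hD] at hcast
    push_cast
    nlinarith [hcast]
  set y : Fin m → ℤ := fun i => r * zx i + q * g i with hy
  have hpoint : ∑ j : ↥Vq, wt j • e (j : Fin m → ℚ) = (fun i => ((y i : ℤ) : ℝ)) := by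
    funext i
    rw [Finset.sum_apply]
    have hxco : x i = ∑ j ∈ s, w j * (((j : Fin m → ℚ)) i : ℝ) := by
      have hcf := congrFun hxw i
      rw [Finset.sum_apply] at hcf
      simpa [he] using hcf
    simp only [Pi.smul_apply, smul_eq_mul, hwt, he]
    have expand : ∀ j : ↥Vq,
        ((r : ℝ) * (if j ∈ s then w j else 0) + (q : ℝ) * A) * (((j : Fin m → ℚ)) i : ℝ)
        = (r : ℝ) * (if j ∈ s then w j * (((j : Fin m → ℚ)) i : ℝ) else 0)
          + (q : ℝ) * (A : ℝ) * (((j : Fin m → ℚ)) i : ℝ) := by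
      intro j
      by_cases hj : j ∈ s <;> simp [hj] <;> ring
    rw [Finset.sum_congr rfl fun j _ => expand j]
    rw [Finset.sum_add_distrib, ← Finset.mul_sum, ← Finset.mul_sum,
      Finset.sum_ite_mem, Finset.univ_inter, ← hxco]
    have hsub : ∑ j : ↥Vq, (((j : Fin m → ℚ)) i : ℝ) = ∑ v ∈ Vq, ((v i : ℚ) : ℝ) :=
      Finset.sum_coe_sort Vq (fun v => ((v i : ℚ) : ℝ))
    have hgi : ((g i : ℤ) : ℝ) = (A : ℝ) * ∑ v ∈ Vq, ((v i : ℚ) : ℝ) := by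
      rw [hg]
      push_cast
      rw [Finset.mul_sum]
      exact Finset.sum_congr rfl fun v hv => hzfR v hv i
    have hyi : ((y i : ℤ) : ℝ) = (r : ℝ) * ((zx i : ℤ) : ℝ) + (q : ℝ) * ((g i : ℤ) : ℝ) := by
      rw [hy]
      push_cast
      ring
    rw [hsub, hyi, hgi, ← hzx i]
    ring
  have hz : ∀ j ∈ (Finset.univ : Finset ↥Vq), e ↑j ∈ e '' (↑Vq : Set (Fin m → ℚ)) :=
    fun j _ => ⟨(j : Fin m → ℚ), j.2, rfl⟩
  have hmem := Finset.centerMass_mem_convexHull (Finset.univ : Finset ↥Vq)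
    (fun j _ => hwt0 j) (by rw [hwtsum]; exact_mod_cast hnpos) hz
  rw [Finset.centerMass, hwtsum, hpoint] at hmem
  refine ⟨y, ?_⟩
  have hne : (n : ℝ) ≠ 0 := by exact_mod_cast hnpos.ne'
  have h1 : (fun i => ((y i : ℤ) : ℝ)) = (n : ℝ) • ((n : ℝ)⁻¹ • (fun i => ((y i : ℤ) : ℝ))) :=
    (smul_inv_smul₀ hne _).symm
  rw [h1]
  exact Set.smul_mem_smul_set (hSF hmem)
end
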